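/- Let T > 0 and let v : ℝ × ℝ³ → ℝ³ be continuously differentiable with |(∇_x · v)(t,x)| ≤ C for all (t,x) ∈ [0,T] × ℝ³, for some constant C ≥ 0. Let f : ℝ × ℝ³ → ℝ be continuously differentiable, suppose there is a compact set K ⊂ ℝ³ with f(t,x) = 0 whenever t ∈ [0,T] and x ∉ K, and suppose ∂_t f(t,x) + v(t,x) · ∇_x f(t,x) = 0 for all (t,x) ∈ [0,T] × ℝ³. Then for every t ∈ [0,T], ∫_{ℝ³} f(t,x)² dx ≤ e^{C t} ∫_{ℝ³} f(0,x)² dx. In particular, if f(0,·) ≡ 0 then f(t,·) ≡ 0 for all t ∈ [0,T]. -/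

import Mathlib

open Matrix MeasureTheory

section statement7aux

open Set

/-- Integral of the divergence of a C¹ vector field vanishing outside a compact set is zero. -/
lemma integral_div_eq_zero_of_compact_support
    (K : Set (Fin 3 → ℝ)) (hK : IsCompact K)
    (g : (Fin 3 → ℝ) → Fin 3 → ℝ) (g' : (Fin 3 → ℝ) → ((Fin 3 → ℝ) →L[ℝ] (Fin 3 → ℝ)))
    (hd : ∀ x, HasFDerivAt g (g' x) x)
    (hgc : Continuous g) (hg'c : Continuous g')
    (h0 : ∀ x ∉ K, g x = 0) :
    ∫ x : Fin 3 → ℝ, ∑ i : Fin 3, g' x (Pi.single i 1) i = 0 := by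
  obtain ⟨R, hR0, hR⟩ := hK.isBounded.exists_pos_norm_le
  have hnotK : ∀ x : Fin 3 → ℝ, ∀ i : Fin 3, R < |x i| → x ∉ K := by
    intro x i hxi hxK
    exact absurd ((norm_le_pi_norm x i).trans (hR x hxK))
      (by simpa [Real.norm_eq_abs] using hxi.not_ge)
  have hg'0 : ∀ x ∉ K, g' x = 0 := by
    intro x hx
    have hev : g =ᶠ[nhds x] (fun _ => 0) :=
      Filter.eventually_of_mem (hK.isClosed.isOpen_compl.mem_nhds hx) h0
    have h1 : fderiv ℝ g x = g' x := (hd x).fderiv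
    have h2 : fderiv ℝ g x = fderiv ℝ (fun _ : Fin 3 → ℝ => (0 : Fin 3 → ℝ)) x :=
      hev.fderiv_eq
    rw [h1] at h2; rw [h2, fderiv_fun_const]; rfl
  set a : Fin 3 → ℝ := fun _ => -(R + 1) with ha
  set b : Fin 3 → ℝ := fun _ => (R + 1) with hb
  have hKab : K ⊆ Icc a b := by
    intro x hxK
    constructor <;> intro i <;>
      [skip; skip] <;>
      · have := (norm_le_pi_norm x i).trans (hR x hxK)
        rw [Real.norm_eq_abs, abs_le] at this
        simp only [ha, hb]
        linarith [this.1, this.2]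
  have hdivcont : Continuous (fun x => ∑ i : Fin 3, g' x (Pi.single i 1) i) := by
    refine continuous_finset_sum _ fun i _ => ?_
    exact (continuous_apply i).comp ((hg'c.clm_apply continuous_const))
  have h0' : ∀ x ∉ Icc a b, ∑ i : Fin 3, g' x (Pi.single i 1) i = 0 := by
    intro x hx
    have : x ∉ K := fun h => hx (hKab h)
    simp [hg'0 x this]
  rw [← setIntegral_eq_integral_of_forall_compl_eq_zero h0']
  have hle : a ≤ b := fun i => by simp only [ha, hb]; linarith
  rw [integral_divergence_of_hasFDerivAt_off_countable (n := 2) a b hle g g' ∅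
    countable_empty hgc.continuousOn (fun x _ => hd x)
    (hdivcont.continuousOn.integrableOn_compact isCompact_Icc)]
  refine Finset.sum_eq_zero fun i _ => ?_
  have hfront : ∀ y : Fin 2 → ℝ, g (i.insertNth (b i) y) i = 0 := by
    intro y
    have : i.insertNth (b i) y ∉ K := by
      refine hnotK _ i ?_
      rw [Fin.insertNth_apply_same]
      simp only [hb]; rw [abs_of_pos (by linarith)]; linarith
    simp [h0 _ this]
  have hback : ∀ y : Fin 2 → ℝ, g (i.insertNth (a i) y) i = 0 := by
    intro y
    have : i.insertNth (a i) y ∉ K := by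
      refine hnotK _ i ?_
      rw [Fin.insertNth_apply_same]
      simp only [ha]; rw [abs_of_neg (by linarith)]; linarith
    simp [h0 _ this]
  simp [hfront, hback]

variable (v : ℝ × (Fin 3 → ℝ) → Fin 3 → ℝ) (f : ℝ × (Fin 3 → ℝ) → ℝ)

/-- time derivative of `f` along the curve `s ↦ (s,x)` -/
lemma statement7_time_deriv (hf : ContDiff ℝ 1 f) (t : ℝ) (x : Fin 3 → ℝ) :
    HasDerivAt (fun s => f (s, x)) (fderiv ℝ f (t, x) (1, 0)) t := by
  have h1 : HasDerivAt (fun s : ℝ => (s, x)) ((1 : ℝ), (0 : Fin 3 → ℝ)) t := by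
    simpa using ((hasDerivAt_id t).prodMk (hasDerivAt_const t x))
  exact (hf.differentiable one_ne_zero (t, x)).hasFDerivAt.comp_hasDerivAt t h1

/-- time derivative of `f²` -/
lemma statement7_time_deriv_sq (hf : ContDiff ℝ 1 f) (t : ℝ) (x : Fin 3 → ℝ) :
    HasDerivAt (fun s => f (s, x) ^ 2) (2 * f (t, x) * fderiv ℝ f (t, x) (1, 0)) t := by
  simpa using (statement7_time_deriv f hf t x).fun_pow 2

lemma statement7_hasDerivAt_G (hf : ContDiff ℝ 1 f)
    (K : Set (Fin 3 → ℝ)) (hK : IsCompact K) (t₀ : ℝ) :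
    HasDerivAt (fun t => ∫ x in K, f (t, x) ^ 2)
      (∫ x in K, 2 * f (t₀, x) * fderiv ℝ f (t₀, x) (1, 0)) t₀ := by
  have hfc : Continuous f := hf.continuous
  have hf'c : Continuous (fderiv ℝ f) := hf.continuous_fderiv one_ne_zero
  have hF'cont : ∀ t : ℝ,
      Continuous (fun x : Fin 3 → ℝ => 2 * f (t, x) * fderiv ℝ f (t, x) (1, 0)) := by
    intro t
    have h1 : Continuous fun x : Fin 3 → ℝ => ((t, x) : ℝ × (Fin 3 → ℝ)) :=
      Continuous.prodMk_right t
    exact ((continuous_const.mul (hfc.comp h1)).mul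
      (((hf'c.comp h1).clm_apply continuous_const)))
  have hφc : Continuous (fun p : ℝ × (Fin 3 → ℝ) => 2 * f p * fderiv ℝ f p (1, 0)) :=
    (continuous_const.mul hfc).mul (hf'c.clm_apply continuous_const)
  obtain ⟨M, hM⟩ :=
    ((isCompact_Icc (a := t₀ - 1) (b := t₀ + 1)).prod hK).exists_bound_of_continuousOn
      hφc.continuousOn
  refine (hasDerivAt_integral_of_dominated_loc_of_deriv_le (Metric.ball_mem_nhds t₀ one_pos)
    (F := fun t x => f (t, x) ^ 2) (F' := fun t x => 2 * f (t, x) * fderiv ℝ f (t, x) (1, 0))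
    (bound := fun _ => M) ?_ ?_ ?_ ?_ ?_ ?_).2
  · exact Filter.Eventually.of_forall fun t =>
      (((hfc.comp (Continuous.prodMk_right t)).pow 2)).aestronglyMeasurable
  · exact ((((hfc.comp (Continuous.prodMk_right t₀)).pow 2)).continuousOn.integrableOn_compact hK)
  · exact (hF'cont t₀).aestronglyMeasurable
  · refine (ae_restrict_mem hK.measurableSet).mono fun x hx => ?_
    intro t ht
    have htI : t ∈ Icc (t₀ - 1) (t₀ + 1) := by
      rw [Metric.mem_ball, Real.dist_eq, abs_lt] at ht
      constructor <;> linarith [ht.1, ht.2]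
    exact hM ((t, x)) ⟨htI, hx⟩
  · exact integrableOn_const hK.measure_lt_top.ne
  · exact Filter.Eventually.of_forall fun x t _ => statement7_time_deriv_sq f hf t x

lemma statement7_div_identity (hv : ContDiff ℝ 1 v) (hf : ContDiff ℝ 1 f)
    (t : ℝ) (x : Fin 3 → ℝ) :
    ∑ i : Fin 3, fderiv ℝ (fun y => f (t, y) ^ 2 • v (t, y)) x (Pi.single i 1) i
      = 2 * f (t, x) * ∑ i : Fin 3, v (t, x) i * fderiv ℝ f (t, x) (0, Pi.single i 1)
        + f (t, x) ^ 2 * ∑ i : Fin 3, fderiv ℝ v (t, x) (0, Pi.single i 1) i := by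
  have hψ : HasFDerivAt (fun y : Fin 3 → ℝ => ((t, y) : ℝ × (Fin 3 → ℝ)))
      (ContinuousLinearMap.inr ℝ ℝ (Fin 3 → ℝ)) x := hasFDerivAt_prodMk_right t x
  have h1 : HasFDerivAt (fun y : Fin 3 → ℝ => f (t, y))
      ((fderiv ℝ f (t, x)).comp (ContinuousLinearMap.inr ℝ ℝ (Fin 3 → ℝ))) x :=
    (hf.differentiable one_ne_zero (t, x)).hasFDerivAt.comp x hψ
  have h2 := h1.fun_mul h1
  have h3 : HasFDerivAt (fun y : Fin 3 → ℝ => v (t, y))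
      ((fderiv ℝ v (t, x)).comp (ContinuousLinearMap.inr ℝ ℝ (Fin 3 → ℝ))) x :=
    (hv.differentiable one_ne_zero (t, x)).hasFDerivAt.comp x hψ
  have h4 := h2.fun_smul h3
  have heq : (fun y => f (t, y) ^ 2 • v (t, y))
      = fun y => (f (t, y) * f (t, y)) • v (t, y) := by
    funext y; rw [sq]
  rw [heq, h4.fderiv]
  simp only [ContinuousLinearMap.add_apply, ContinuousLinearMap.smul_apply,
    ContinuousLinearMap.smulRight_apply, ContinuousLinearMap.coe_comp', Function.comp_apply,
    ContinuousLinearMap.inr_apply, Pi.add_apply, Pi.smul_apply, smul_eq_mul,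
    ContinuousLinearMap.coe_smul', Pi.pow_apply]
  rw [Finset.sum_add_distrib, Finset.mul_sum, Finset.mul_sum]
  rw [sq, add_comm]
  congr 1 <;> refine Finset.sum_congr rfl fun i _ => ?_ <;> ring

end statement7aux

theorem statement7 (T C : ℝ) (hT : 0 < T) (hC : 0 ≤ C)
    (v : ℝ × (Fin 3 → ℝ) → Fin 3 → ℝ) (f : ℝ × (Fin 3 → ℝ) → ℝ)
    (hv : ContDiff ℝ 1 v) (hf : ContDiff ℝ 1 f)
    (hdiv : ∀ t ∈ Set.Icc (0 : ℝ) T, ∀ x : Fin 3 → ℝ,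
      |∑ i : Fin 3, fderiv ℝ v (t, x) (0, Pi.single i 1) i| ≤ C)
    (K : Set (Fin 3 → ℝ)) (hK : IsCompact K)
    (hsupp : ∀ t ∈ Set.Icc (0 : ℝ) T, ∀ x ∉ K, f (t, x) = 0)
    (hpde : ∀ t ∈ Set.Icc (0 : ℝ) T, ∀ x : Fin 3 → ℝ,
      fderiv ℝ f (t, x) (1, 0)
        + v (t, x) ⬝ᵥ (fun i => fderiv ℝ f (t, x) (0, Pi.single i 1)) = 0) :
    (∀ t ∈ Set.Icc (0 : ℝ) T,
      (∫ x : Fin 3 → ℝ, f (t, x) ^ 2) ≤ Real.exp (C * t) * ∫ x : Fin 3 → ℝ, f (0, x) ^ 2) ∧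
    ((∀ x : Fin 3 → ℝ, f (0, x) = 0) →
      ∀ t ∈ Set.Icc (0 : ℝ) T, ∀ x : Fin 3 → ℝ, f (t, x) = 0) := by
  have hfc : Continuous f := hf.continuous
  set G : ℝ → ℝ := fun t => ∫ x in K, f (t, x) ^ 2 with hGdef
  have hG : ∀ t₀ : ℝ, HasDerivAt G (∫ x in K, 2 * f (t₀, x) * fderiv ℝ f (t₀, x) (1, 0)) t₀ :=
    fun t₀ => statement7_hasDerivAt_G f hf K hK t₀
  have hGnonneg : ∀ t, 0 ≤ G t := fun t => integral_nonneg fun x => sq_nonneg _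
  have hEG : ∀ t ∈ Set.Icc (0 : ℝ) T, (∫ x : Fin 3 → ℝ, f (t, x) ^ 2) = G t := by
    intro t ht
    exact (setIntegral_eq_integral_of_forall_compl_eq_zero fun x hx => by
      rw [hsupp t ht x hx]; ring).symm
  -- the derivative bound
  have hbound : ∀ t ∈ Set.Ico (0 : ℝ) T,
      ‖∫ x in K, 2 * f (t, x) * fderiv ℝ f (t, x) (1, 0)‖ ≤ C * ‖G t‖ + 0 := by
    intro t ht
    have htI : t ∈ Set.Icc (0 : ℝ) T := ⟨ht.1, ht.2.le⟩
    set g : (Fin 3 → ℝ) → Fin 3 → ℝ := fun y => f (t, y) ^ 2 • v (t, y) with hgdef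
    have hψC : ContDiff ℝ 1 (fun y : Fin 3 → ℝ => ((t, y) : ℝ × (Fin 3 → ℝ))) :=
      contDiff_const.prodMk contDiff_id
    have hgC : ContDiff ℝ 1 g := ((hf.comp hψC).pow 2).smul (hv.comp hψC)
    have hdivg0 : ∫ x : Fin 3 → ℝ, ∑ i : Fin 3, fderiv ℝ g x (Pi.single i 1) i = 0 := by
      apply integral_div_eq_zero_of_compact_support K hK g (fderiv ℝ g)
        (fun x => (hgC.differentiable one_ne_zero x).hasFDerivAt) hgC.continuous
        (hgC.continuous_fderiv one_ne_zero)
      intro x hx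
      simp [hgdef, hsupp t htI x hx]
    have hpt : ∀ x : Fin 3 → ℝ,
        2 * f (t, x) * fderiv ℝ f (t, x) (1, 0)
          = f (t, x) ^ 2 * (∑ i : Fin 3, fderiv ℝ v (t, x) (0, Pi.single i 1) i)
            - ∑ i : Fin 3, fderiv ℝ g x (Pi.single i 1) i := by
      intro x
      have h1 := statement7_div_identity v f hv hf t x
      have h2 := hpde t htI x
      simp only [dotProduct] at h2
      have hS : (∑ i : Fin 3, v (t, x) i * fderiv ℝ f (t, x) (0, Pi.single i 1))
          = -fderiv ℝ f (t, x) (1, 0) := by linarith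
      rw [← hgdef] at h1
      rw [h1, hS]
      ring
    have hDc : Continuous
        (fun x : Fin 3 → ℝ => ∑ i : Fin 3, fderiv ℝ v (t, x) (0, Pi.single i 1) i) := by
      refine continuous_finset_sum _ fun i _ => ?_
      exact (continuous_apply i).comp
        (((hv.continuous_fderiv one_ne_zero).comp (Continuous.prodMk_right t)).clm_apply continuous_const)
    have hfc2 : Continuous (fun x : Fin 3 → ℝ => f (t, x) ^ 2) :=
      (hfc.comp (Continuous.prodMk_right t)).pow 2
    have hAc : Continuous (fun x : Fin 3 → ℝ =>
        f (t, x) ^ 2 * ∑ i : Fin 3, fderiv ℝ v (t, x) (0, Pi.single i 1) i) := hfc2.mul hDc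
    have hBc : Continuous (fun x : Fin 3 → ℝ => ∑ i : Fin 3, fderiv ℝ g x (Pi.single i 1) i) := by
      refine continuous_finset_sum _ fun i _ => ?_
      exact (continuous_apply i).comp ((hgC.continuous_fderiv one_ne_zero).clm_apply continuous_const)
    have hB0 : ∀ x ∉ K, (∑ i : Fin 3, fderiv ℝ g x (Pi.single i 1) i) = 0 := by
      intro x hx
      have hev : g =ᶠ[nhds x] (fun _ => 0) :=
        Filter.eventually_of_mem (hK.isClosed.isOpen_compl.mem_nhds hx)
          (fun y hy => by simp [hgdef, hsupp t htI y hy])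
      have hz : fderiv ℝ g x = fderiv ℝ (fun _ : Fin 3 → ℝ => (0 : Fin 3 → ℝ)) x := hev.fderiv_eq
      rw [fderiv_fun_const] at hz
      simp [hz]
    have hsplit : (∫ x in K, 2 * f (t, x) * fderiv ℝ f (t, x) (1, 0))
        = ∫ x in K, f (t, x) ^ 2 * ∑ i : Fin 3, fderiv ℝ v (t, x) (0, Pi.single i 1) i := by
      have : (∫ x in K, 2 * f (t, x) * fderiv ℝ f (t, x) (1, 0))
          = ∫ x in K, (f (t, x) ^ 2 * (∑ i : Fin 3, fderiv ℝ v (t, x) (0, Pi.single i 1) i)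
              - ∑ i : Fin 3, fderiv ℝ g x (Pi.single i 1) i) := by
        exact integral_congr_ae (Filter.Eventually.of_forall fun x => hpt x)
      rw [this, integral_sub (hAc.continuousOn.integrableOn_compact hK)
        (hBc.continuousOn.integrableOn_compact hK),
        setIntegral_eq_integral_of_forall_compl_eq_zero hB0, hdivg0, sub_zero]
    rw [hsplit]
    have hnorm : ∀ x : Fin 3 → ℝ,
        ‖f (t, x) ^ 2 * ∑ i : Fin 3, fderiv ℝ v (t, x) (0, Pi.single i 1) i‖
          ≤ C * f (t, x) ^ 2 := by
      intro x
      rw [Real.norm_eq_abs, abs_mul, abs_of_nonneg (sq_nonneg _)]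
      have := hdiv t htI x
      calc f (t, x) ^ 2 * |∑ i : Fin 3, fderiv ℝ v (t, x) (0, Pi.single i 1) i|
          ≤ f (t, x) ^ 2 * C := by
            exact mul_le_mul_of_nonneg_left this (sq_nonneg _)
        _ = C * f (t, x) ^ 2 := by ring
    calc ‖∫ x in K, f (t, x) ^ 2 * ∑ i : Fin 3, fderiv ℝ v (t, x) (0, Pi.single i 1) i‖
        ≤ ∫ x in K, ‖f (t, x) ^ 2 * ∑ i : Fin 3, fderiv ℝ v (t, x) (0, Pi.single i 1) i‖ :=
          norm_integral_le_integral_norm _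
      _ ≤ ∫ x in K, C * f (t, x) ^ 2 := by
          refine integral_mono (hAc.norm.continuousOn.integrableOn_compact hK)
            ((continuous_const.mul hfc2).continuousOn.integrableOn_compact hK) hnorm
      _ = C * G t := by rw [integral_const_mul]
      _ = C * ‖G t‖ + 0 := by rw [Real.norm_of_nonneg (hGnonneg t), add_zero]
  -- Grönwall
  have hcont : ContinuousOn G (Set.Icc 0 T) := fun t _ => ((hG t).continuousAt).continuousWithinAt
  have hgron := norm_le_gronwallBound_of_norm_deriv_right_le hcont
    (fun t _ => (hG t).hasDerivWithinAt) (Real.norm_of_nonneg (hGnonneg 0)).le hbound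
  have key : ∀ t ∈ Set.Icc (0 : ℝ) T, G t ≤ Real.exp (C * t) * G 0 := by
    intro t ht
    have h := hgron t ht
    rw [Real.norm_of_nonneg (hGnonneg t), sub_zero, gronwallBound_ε0] at h
    linarith [h]
  have h0mem : (0 : ℝ) ∈ Set.Icc (0 : ℝ) T := ⟨le_refl 0, hT.le⟩
  have part1 : ∀ t ∈ Set.Icc (0 : ℝ) T,
      (∫ x : Fin 3 → ℝ, f (t, x) ^ 2) ≤ Real.exp (C * t) * ∫ x : Fin 3 → ℝ, f (0, x) ^ 2 := by
    intro t ht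
    rw [hEG t ht, hEG 0 h0mem]
    exact key t ht
  refine ⟨part1, ?_⟩
  intro h0 t ht x
  have hE0 : (∫ x : Fin 3 → ℝ, f (0, x) ^ 2) = 0 := by simp [h0]
  have h1 : (∫ x : Fin 3 → ℝ, f (t, x) ^ 2) ≤ 0 := by
    have := part1 t ht
    rw [hE0, mul_zero] at this
    exact this
  have hcs : HasCompactSupport (fun x : Fin 3 → ℝ => f (t, x) ^ 2) :=
    HasCompactSupport.intro hK fun x hx => by rw [hsupp t ht x hx]; ring
  have hint : Integrable (fun x : Fin 3 → ℝ => f (t, x) ^ 2) :=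
    ((hfc.comp (Continuous.prodMk_right t)).pow 2).integrable_of_hasCompactSupport hcs
  have hzero : (∫ x : Fin 3 → ℝ, f (t, x) ^ 2) = 0 :=
    le_antisymm h1 (integral_nonneg fun x => sq_nonneg _)
  have hae : (fun x : Fin 3 → ℝ => f (t, x) ^ 2) =ᵐ[volume] 0 :=
    (integral_eq_zero_iff_of_nonneg (fun x => sq_nonneg _) hint).1 hzero
  have hfun : (fun x : Fin 3 → ℝ => f (t, x) ^ 2) = 0 :=
    (((hfc.comp (Continuous.prodMk_right t)).pow 2).ae_eq_iff_eq volume continuous_const).1 hae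
  have := congrFun hfun x
  simpa using sq_eq_zero_iff.mp this
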